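/- arXiv:0705.0167 — 5 statements merged into one kernel-verified Lean document; each statement's English description precedes it below -/
import Mathlib

section
/- Let A, A* be a tridiagonal pair on V, with d + 1 the number of eigenspaces of A (from condition (ii)) and δ + 1 the number of eigenspaces of A* (from condition (iii)). Then d = δ. -/
noncomputable section

open Module

/-- The `i`-th eigenspace in an ordering `θ 0, …, θ d` of the eigenvalues of `A`,
with the convention that it is `⊥` for `i > d` (so `V_{d+1} = 0`). -/
def evSp {V : Type*} [AddCommGroup V] [Module ℂ V]
    (A : Module.End ℂ V) (θ : ℕ → ℂ) (d : ℕ) (i : ℕ) : Submodule ℂ V :=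
  if i ≤ d then A.eigenspace (θ i) else ⊥

/-- A tridiagonal pair `A, A*` on `V`: both maps are diagonalizable, there are orderings
`V_0, …, V_d` (with eigenvalues `θ 0, …, θ d`) of the eigenspaces of `A` and
`V*_0, …, V*_δ` (with eigenvalues `ψ 0, …, ψ δ`) of the eigenspaces of `A*`
satisfying the tridiagonal conditions (with `V_{-1} = 0`, `V_{d+1} = 0`,
`V*_{-1} = 0`, `V*_{δ+1} = 0`), and the pair is irreducible. -/
structure TDPair (V : Type*) [AddCommGroup V] [Module ℂ V] where
  A : Module.End ℂ V
  Astar : Module.End ℂ V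
  d : ℕ
  δ : ℕ
  θ : ℕ → ℂ
  ψ : ℕ → ℂ
  θ_inj : ∀ i ≤ d, ∀ j ≤ d, θ i = θ j → i = j
  ψ_inj : ∀ i ≤ δ, ∀ j ≤ δ, ψ i = ψ j → i = j
  eigA_ne : ∀ i ≤ d, A.eigenspace (θ i) ≠ ⊥
  eigAstar_ne : ∀ i ≤ δ, Astar.eigenspace (ψ i) ≠ ⊥
  eigA_all : ∀ μ : ℂ, A.eigenspace μ ≠ ⊥ → ∃ i ≤ d, μ = θ i
  eigAstar_all : ∀ μ : ℂ, Astar.eigenspace μ ≠ ⊥ → ∃ i ≤ δ, μ = ψ i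
  diagA : ⨆ i ∈ Finset.range (d + 1), A.eigenspace (θ i) = ⊤
  diagAstar : ⨆ i ∈ Finset.range (δ + 1), Astar.eigenspace (ψ i) = ⊤
  triA : ∀ i ≤ d, Submodule.map Astar (evSp A θ d i) ≤
      evSp A θ d (i - 1) ⊔ evSp A θ d i ⊔ evSp A θ d (i + 1)
  triAstar : ∀ i ≤ δ, Submodule.map A (evSp Astar ψ δ i) ≤
      evSp Astar ψ δ (i - 1) ⊔ evSp Astar ψ δ i ⊔ evSp Astar ψ δ (i + 1)
  irred : ∀ W : Submodule ℂ V, Submodule.map A W ≤ W → Submodule.map Astar W ≤ W →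
      W = ⊥ ∨ W = ⊤

/-- The tridiagonal pair obtained by swapping `A` and `A*`. -/
def TDPair.swap {V : Type*} [AddCommGroup V] [Module ℂ V] (P : TDPair V) : TDPair V where
  A := P.Astar
  Astar := P.A
  d := P.δ
  δ := P.d
  θ := P.ψ
  ψ := P.θ
  θ_inj := P.ψ_inj
  ψ_inj := P.θ_inj
  eigA_ne := P.eigAstar_ne
  eigAstar_ne := P.eigA_ne
  eigA_all := P.eigAstar_all
  eigAstar_all := P.eigA_all
  diagA := P.diagAstar
  diagAstar := P.diagA
  triA := P.triAstar
  triAstar := P.triA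
  irred := fun W h1 h2 => P.irred W h2 h1

theorem TDPair.d_le_δ {V : Type*} [AddCommGroup V] [Module ℂ V]
    (P : TDPair V) : P.d ≤ P.δ := by
  by_contra hlt
  have hδd : P.δ < P.d := by omega
  set A := P.A with hA
  set B := P.Astar with hB
  set θ := P.θ with hθ
  set ψ := P.ψ with hψ
  set d := P.d with hd
  set δ := P.δ with hδ'
  -- lower sums of A-eigenspaces, upper sums of A*-eigenspaces
  set F : ℕ → Submodule ℂ V := fun i => ⨆ h ∈ Finset.range i, A.eigenspace (θ h) with hF
  set G : ℕ → Submodule ℂ V := fun i => ⨆ h ∈ Finset.Icc i δ, B.eigenspace (ψ h) with hG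
  set W : Submodule ℂ V := ⨆ i ∈ Finset.range (δ + 1), F (i + 1) ⊓ G i with hW
  have hFmono : ∀ i j : ℕ, i ≤ j → F i ≤ F j := by
    intro i j hij
    exact biSup_mono fun h hh => Finset.mem_range.mpr (lt_of_lt_of_le (Finset.mem_range.mp hh) hij)
  have hGanti : ∀ i j : ℕ, i ≤ j → G j ≤ G i := by
    intro i j hij
    exact biSup_mono fun h hh => by
      simp only [Finset.mem_Icc] at *; omega
  have hleF : ∀ h i : ℕ, h < i → A.eigenspace (θ h) ≤ F i := by
    intro h i hhi
    exact le_biSup (fun h => A.eigenspace (θ h)) (Finset.mem_range.mpr hhi)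
  have hleG : ∀ h i : ℕ, i ≤ h → h ≤ δ → B.eigenspace (ψ h) ≤ G i := by
    intro h i hih hhδ
    exact le_biSup (fun h => B.eigenspace (ψ h)) (Finset.mem_Icc.mpr ⟨hih, hhδ⟩)
  have hEvF : ∀ k i : ℕ, k < i → evSp A θ d k ≤ F i := by
    intro k i hki
    unfold evSp
    split_ifs with hk
    · exact hleF k i hki
    · exact bot_le
  have hEvG : ∀ k i : ℕ, i ≤ k → evSp B ψ δ k ≤ G i := by
    intro k i hik
    unfold evSp
    split_ifs with hk
    · exact hleG k i hik hk
    · exact bot_le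
  -- scalar-shift lemmas
  have happ : ∀ (f : Module.End ℂ V) (c : ℂ) (x : V), (f - c • 1) x = f x - c • x := by
    intro f c x
    simp [LinearMap.sub_apply, LinearMap.smul_apply, Module.End.one_apply]
  have hscalF : ∀ i : ℕ, ∀ x ∈ F (i + 1), (A - θ i • 1) x ∈ F i := by
    intro i x hx
    have : F (i + 1) ≤ Submodule.comap (A - θ i • 1) (F i) := by
      refine iSup₂_le fun h hh => ?_
      intro y hy
      have hyA : A y = θ h • y := Module.End.mem_eigenspace_iff.mp hy
      have : (A - θ i • 1) y = (θ h - θ i) • y := by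
        rw [happ, hyA, sub_smul]
      simp only [Submodule.mem_comap, this]
      rcases eq_or_ne h i with rfl | hne
      · simp
      · have hhi : h < i := by
          have := Finset.mem_range.mp hh; omega
        exact Submodule.smul_mem _ _ (hleF h i hhi hy)
    exact this hx
  have hscalG : ∀ i : ℕ, ∀ x ∈ G i, (B - ψ i • 1) x ∈ G (i + 1) := by
    intro i x hx
    have : G i ≤ Submodule.comap (B - ψ i • 1) (G (i + 1)) := by
      refine iSup₂_le fun h hh => ?_
      intro y hy
      have hyB : B y = ψ h • y := Module.End.mem_eigenspace_iff.mp hy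
      have : (B - ψ i • 1) y = (ψ h - ψ i) • y := by
        rw [happ, hyB, sub_smul]
      simp only [Submodule.mem_comap, this]
      rcases eq_or_ne h i with rfl | hne
      · simp
      · have hhi : i + 1 ≤ h ∧ h ≤ δ := by
          have := Finset.mem_Icc.mp hh; omega
        exact Submodule.smul_mem _ _ (hleG h (i + 1) hhi.1 hhi.2 hy)
    exact this hx
  -- A moves G i into G (i-1)
  have hAG : ∀ i : ℕ, ∀ x ∈ G i, A x ∈ G (i - 1) := by
    intro i x hx
    have : G i ≤ Submodule.comap A (G (i - 1)) := by
      refine iSup₂_le fun h hh => ?_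
      intro y hy
      obtain ⟨hih, hhδ⟩ := Finset.mem_Icc.mp hh
      have hy' : y ∈ evSp B ψ δ h := by
        unfold evSp; rw [if_pos hhδ]; exact hy
      have hmem := P.triAstar h hhδ (Submodule.mem_map_of_mem hy')
      simp only [Submodule.mem_comap]
      have hle : evSp B ψ δ (h - 1) ⊔ evSp B ψ δ h ⊔ evSp B ψ δ (h + 1) ≤ G (i - 1) :=
        sup_le (sup_le (hEvG (h - 1) (i - 1) (by omega)) (hEvG h (i - 1) (by omega)))
          (hEvG (h + 1) (i - 1) (by omega))
      exact hle hmem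
    exact this hx
  -- B moves F (i+1) into F (i+2), provided i + 1 ≤ d
  have hBF : ∀ i : ℕ, i < d → ∀ x ∈ F (i + 1), B x ∈ F (i + 2) := by
    intro i hid x hx
    have : F (i + 1) ≤ Submodule.comap B (F (i + 2)) := by
      refine iSup₂_le fun h hh => ?_
      intro y hy
      have hhi : h ≤ i := by
        have := Finset.mem_range.mp hh; omega
      have hhd : h ≤ d := by omega
      have hy' : y ∈ evSp A θ d h := by
        unfold evSp; rw [if_pos hhd]; exact hy
      have hmem := P.triA h hhd (Submodule.mem_map_of_mem hy')
      simp only [Submodule.mem_comap]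
      have hle : evSp A θ d (h - 1) ⊔ evSp A θ d h ⊔ evSp A θ d (h + 1) ≤ F (i + 2) :=
        sup_le (sup_le (hEvF (h - 1) (i + 2) (by omega)) (hEvF h (i + 2) (by omega)))
          (hEvF (h + 1) (i + 2) (by omega))
      exact hle hmem
    exact this hx
  have hterm : ∀ i : ℕ, i ≤ δ → F (i + 1) ⊓ G i ≤ W := by
    intro i hi
    exact le_biSup (fun i => F (i + 1) ⊓ G i) (Finset.mem_range.mpr (by omega : i < δ + 1))
  -- W is A-invariant
  have hAW : Submodule.map A W ≤ W := by
    rw [Submodule.map_le_iff_le_comap]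
    refine iSup₂_le fun i hi => ?_
    have hiδ : i ≤ δ := by have := Finset.mem_range.mp hi; omega
    rintro x ⟨hxF, hxG⟩
    simp only [Submodule.mem_comap]
    have hdec : A x = (A - θ i • 1) x + θ i • x := by rw [happ]; abel
    rw [hdec]
    refine Submodule.add_mem _ ?_ (hterm i hiδ ⟨Submodule.smul_mem _ _ hxF, Submodule.smul_mem _ _ hxG⟩)
    rcases Nat.eq_zero_or_pos i with rfl | hpos
    · have h0 : (A - θ 0 • 1) x ∈ F 0 := hscalF 0 x hxF
      have : F 0 = ⊥ := by simp [hF]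
      rw [this] at h0
      simp only [Submodule.mem_bot] at h0
      rw [h0]; exact Submodule.zero_mem _
    · have h1 : (A - θ i • 1) x ∈ F i := hscalF i x hxF
      have h2 : (A - θ i • 1) x ∈ G (i - 1) := by
        rw [happ]
        exact Submodule.sub_mem _ (hAG i x hxG) (Submodule.smul_mem _ _ (hGanti (i - 1) i (by omega) hxG))
      have : F i ⊓ G (i - 1) ≤ W := by
        have := hterm (i - 1) (by omega)
        have heq : i - 1 + 1 = i := by omega
        rwa [heq] at this
      exact this ⟨h1, h2⟩
  -- W is B-invariant
  have hBW : Submodule.map B W ≤ W := by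
    rw [Submodule.map_le_iff_le_comap]
    refine iSup₂_le fun i hi => ?_
    have hiδ : i ≤ δ := by have := Finset.mem_range.mp hi; omega
    rintro x ⟨hxF, hxG⟩
    simp only [Submodule.mem_comap]
    have hdec : B x = (B - ψ i • 1) x + ψ i • x := by rw [happ]; abel
    rw [hdec]
    refine Submodule.add_mem _ ?_ (hterm i hiδ ⟨Submodule.smul_mem _ _ hxF, Submodule.smul_mem _ _ hxG⟩)
    have h2 : (B - ψ i • 1) x ∈ G (i + 1) := hscalG i x hxG
    rcases eq_or_lt_of_le hiδ with heq | hilt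
    · have hIcc : Finset.Icc (i + 1) δ = ∅ := Finset.Icc_eq_empty_of_lt (by omega)
      have : G (i + 1) = ⊥ := by
        simp only [hG, hIcc]
        simp
      rw [this] at h2
      simp only [Submodule.mem_bot] at h2
      rw [h2]; exact Submodule.zero_mem _
    · have h1 : (B - ψ i • 1) x ∈ F (i + 2) := by
        rw [happ]
        exact Submodule.sub_mem _ (hBF i (by omega) x hxF)
          (Submodule.smul_mem _ _ (hFmono (i + 1) (i + 2) (by omega) hxF))
      exact hterm (i + 1) (by omega) ⟨h1, h2⟩
  -- W is nonzero
  have hG0 : G 0 = ⊤ := by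
    have : Finset.Icc 0 δ = Finset.range (δ + 1) := by
      ext h; simp [Finset.mem_Icc, Finset.mem_range]
    rw [hG]; simp only [this]; exact P.diagAstar
  have hF1 : A.eigenspace (θ 0) ≤ F 1 := hleF 0 1 (by omega)
  have hsub : A.eigenspace (θ 0) ≤ W := by
    refine le_trans ?_ (hterm 0 (by omega))
    rw [hG0]
    exact le_inf hF1 le_top
  have hWne : W ≠ ⊥ := by
    intro h
    exact P.eigA_ne 0 (by omega) (le_bot_iff.mp (h ▸ hsub))
  have hWtop : W = ⊤ := (P.irred W hAW hBW).resolve_left hWne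
  -- but W ≤ F (δ + 1), contradicting independence of eigenspaces
  have hWF : W ≤ F (δ + 1) := by
    refine iSup₂_le fun i hi => ?_
    have hiδ : i ≤ δ := by have := Finset.mem_range.mp hi; omega
    exact inf_le_left.trans (hFmono (i + 1) (δ + 1) (by omega))
  have hFsub : F (δ + 1) ≤ ⨆ (μ : ℂ) (_ : μ ≠ θ d), A.eigenspace μ := by
    refine iSup₂_le fun h hh => ?_
    have hhδ : h ≤ δ := by have := Finset.mem_range.mp hh; omega
    have hne : θ h ≠ θ d := by
      intro heq
      have := P.θ_inj h (by omega) d le_rfl heq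
      omega
    exact le_biSup (fun μ => A.eigenspace μ) hne
  have hdisj := Module.End.eigenspaces_iSupIndep A (θ d)
  have : A.eigenspace (θ d) ≤ ⨆ (μ : ℂ) (_ : μ ≠ θ d), A.eigenspace μ :=
    le_top.trans (hWtop ▸ hWF |>.trans hFsub)
  exact P.eigA_ne d le_rfl (hdisj.eq_bot_of_le this)

theorem tdpair_d_eq_delta {V : Type*} [AddCommGroup V] [Module ℂ V]
    [FiniteDimensional ℂ V] (hV : 0 < Module.finrank ℂ V) (P : TDPair V) :
    P.d = P.δ := by
  exact le_antisymm P.d_le_δ P.swap.d_le_δ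

end
end

section
/- Let A, A* be a tridiagonal pair on V with diameter d. Then V = U^{↓↓}_0 + U^{↓↓}_1 + ⋯ + U^{↓↓}_d is a direct sum, where U^{↓↓}_i = (V*_0 + ⋯ + V*_i) ∩ (V_0 + ⋯ + V_{d−i}) for 0 ≤ i ≤ d. -/
noncomputable section

open Module

/-- `U^{↓↓}_i = (V*_0 + ⋯ + V*_i) ∩ (V_0 + ⋯ + V_{d-i})`. -/
def Udd {V : Type*} [AddCommGroup V] [Module ℂ V] (P : TDPair V) (i : ℕ) : Submodule ℂ V :=
  (⨆ k ∈ Finset.range (i + 1), P.Astar.eigenspace (P.ψ k)) ⊓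
  (⨆ k ∈ Finset.range (P.d - i + 1), P.A.eigenspace (P.θ k))

/-- `U^{↑↓}_i = (V*_{d-i} + ⋯ + V*_d) ∩ (V_0 + ⋯ + V_{d-i})`. -/
def Uud {V : Type*} [AddCommGroup V] [Module ℂ V] (P : TDPair V) (i : ℕ) : Submodule ℂ V :=
  (⨆ k ∈ Finset.Icc (P.d - i) P.d, P.Astar.eigenspace (P.ψ k)) ⊓
  (⨆ k ∈ Finset.range (P.d - i + 1), P.A.eigenspace (P.θ k))

/-- `U^{↓↑}_i = (V*_0 + ⋯ + V*_i) ∩ (V_i + ⋯ + V_d)`. -/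
def Udu {V : Type*} [AddCommGroup V] [Module ℂ V] (P : TDPair V) (i : ℕ) : Submodule ℂ V :=
  (⨆ k ∈ Finset.range (i + 1), P.Astar.eigenspace (P.ψ k)) ⊓
  (⨆ k ∈ Finset.Icc i P.d, P.A.eigenspace (P.θ k))

/-- `U^{↑↑}_i = (V*_{d-i} + ⋯ + V*_d) ∩ (V_i + ⋯ + V_d)`. -/
def Uuu {V : Type*} [AddCommGroup V] [Module ℂ V] (P : TDPair V) (i : ℕ) : Submodule ℂ V :=
  (⨆ k ∈ Finset.Icc (P.d - i) P.d, P.Astar.eigenspace (P.ψ k)) ⊓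
  (⨆ k ∈ Finset.Icc i P.d, P.A.eigenspace (P.θ k))

section AuxTD

variable {V : Type*} [AddCommGroup V] [Module ℂ V]

/-- Partial sums of eigenspaces: `eS B φ j = eigenspace (φ 0) + ⋯ + eigenspace (φ j)`. -/
def eS (B : Module.End ℂ V) (φ : ℕ → ℂ) (j : ℕ) : Submodule ℂ V :=
  ⨆ k ∈ Finset.range (j + 1), B.eigenspace (φ k)

lemma eig_le_eS (B : Module.End ℂ V) (φ : ℕ → ℂ) {k j : ℕ} (h : k ≤ j) :
    B.eigenspace (φ k) ≤ eS B φ j :=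
  le_iSup₂ (f := fun k (_ : k ∈ Finset.range (j + 1)) => B.eigenspace (φ k)) k
    (Finset.mem_range.2 (by omega))

lemma eS_mono (B : Module.End ℂ V) (φ : ℕ → ℂ) {j j' : ℕ} (h : j ≤ j') :
    eS B φ j ≤ eS B φ j' := by
  refine iSup₂_le fun k hk => eig_le_eS B φ ?_
  have := Finset.mem_range.1 hk; omega

lemma eS_zero (B : Module.End ℂ V) (φ : ℕ → ℂ) :
    eS B φ 0 = B.eigenspace (φ 0) := by
  refine le_antisymm (iSup₂_le fun k hk => ?_) ?_
  · have : k = 0 := by have := Finset.mem_range.1 hk; omega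
    subst this; exact le_rfl
  · exact eig_le_eS B φ le_rfl

lemma eS_mapSelf (B : Module.End ℂ V) (φ : ℕ → ℂ) (j : ℕ) {x : V} (hx : x ∈ eS B φ j) :
    B x ∈ eS B φ j := by
  have hmap : Submodule.map B (eS B φ j) ≤ eS B φ j := by
    rw [eS, Submodule.map_iSup]
    refine iSup_le fun k => ?_
    rw [Submodule.map_iSup]
    refine iSup_le fun hk => ?_
    have hk' : k ≤ j := by have := Finset.mem_range.1 hk; omega
    refine le_trans ?_ (eig_le_eS B φ hk')
    rintro _ ⟨y, hy, rfl⟩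
    simp only [SetLike.mem_coe] at hy
    rw [Module.End.mem_eigenspace_iff] at hy ⊢
    simp [hy, map_smul]
  exact hmap (Submodule.mem_map_of_mem hx)

lemma eS_mapSub (B : Module.End ℂ V) (φ : ℕ → ℂ) (j : ℕ) {x : V} (hx : x ∈ eS B φ (j + 1)) :
    B x - φ (j + 1) • x ∈ eS B φ j := by
  have hmap : Submodule.map (B - φ (j + 1) • (1 : Module.End ℂ V)) (eS B φ (j + 1)) ≤
      eS B φ j := by
    rw [eS, Submodule.map_iSup]
    refine iSup_le fun k => ?_
    rw [Submodule.map_iSup]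
    refine iSup_le fun hk => ?_
    have hk' : k ≤ j + 1 := by have := Finset.mem_range.1 hk; omega
    rintro _ ⟨y, hy, rfl⟩
    simp only [SetLike.mem_coe] at hy
    have hy' := Module.End.mem_eigenspace_iff.1 hy
    have heq : (B - φ (j + 1) • (1 : Module.End ℂ V)) y = (φ k - φ (j + 1)) • y := by
      simp [LinearMap.sub_apply, LinearMap.smul_apply, hy', sub_smul]
    rw [heq]
    rcases eq_or_lt_of_le hk' with h | h
    · rw [h]; simp
    · exact Submodule.smul_mem _ _ (eig_le_eS B φ (by omega) hy)
  simpa using hmap (Submodule.mem_map_of_mem hx)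

lemma eS_mapOther (B C : Module.End ℂ V) (φ : ℕ → ℂ) (e : ℕ)
    (tri : ∀ i ≤ e, Submodule.map C (evSp B φ e i) ≤
      evSp B φ e (i - 1) ⊔ evSp B φ e i ⊔ evSp B φ e (i + 1))
    {j : ℕ} (hj : j ≤ e) {x : V} (hx : x ∈ eS B φ j) : C x ∈ eS B φ (j + 1) := by
  have hev : ∀ m, evSp B φ e m ≤ B.eigenspace (φ m) := fun m => by
    unfold evSp; split <;> simp
  have hmap : Submodule.map C (eS B φ j) ≤ eS B φ (j + 1) := by
    rw [eS, Submodule.map_iSup]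
    refine iSup_le fun k => ?_
    rw [Submodule.map_iSup]
    refine iSup_le fun hk => ?_
    have hk' : k ≤ j := by have := Finset.mem_range.1 hk; omega
    have h1 : B.eigenspace (φ k) = evSp B φ e k := by
      unfold evSp; rw [if_pos (hk'.trans hj)]
    rw [h1]
    refine (tri k (hk'.trans hj)).trans ?_
    refine sup_le (sup_le ?_ ?_) ?_
    · exact (hev _).trans (eig_le_eS B φ (by omega))
    · exact (hev _).trans (eig_le_eS B φ (by omega))
    · exact (hev _).trans (eig_le_eS B φ (by omega))
  exact hmap (Submodule.mem_map_of_mem hx)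

end AuxTD

/-- The `(↓,↓)/(↑,↓)/(↓,↑)/(↑,↑)`-split decomposition:
`V = U_0 + U_1 + ⋯ + U_d` is a direct sum. -/


theorem tdpair_split_dd {V : Type*} [AddCommGroup V] [Module ℂ V]
    [FiniteDimensional ℂ V] (hV : 0 < Module.finrank ℂ V) (P : TDPair V)
    (hdd : P.δ = P.d) :
    iSupIndep (fun i : Fin (P.d + 1) => Udd P i) ∧
      (⨆ i : Fin (P.d + 1), Udd P i) = ⊤ := by
  classical
  set Xs : ℕ → Submodule ℂ V := eS P.Astar P.ψ with hXsdef
  set Y : ℕ → Submodule ℂ V := eS P.A P.θ with hYdef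
  have hUdd : ∀ i : ℕ, Udd P i = Xs i ⊓ Y (P.d - i) := fun i => rfl
  have hYtop : Y P.d = ⊤ := P.diagA
  have hXtop : Xs P.d = ⊤ := by
    have h := P.diagAstar
    rw [hdd] at h
    exact h
  -- raising/lowering facts
  have hYup : ∀ {j : ℕ}, j ≤ P.d → ∀ {x : V}, x ∈ Y j → P.Astar x ∈ Y (j + 1) :=
    fun hj _ hx => eS_mapOther P.A P.Astar P.θ P.d P.triA hj hx
  have hXup : ∀ {j : ℕ}, j ≤ P.d → ∀ {x : V}, x ∈ Xs j → P.A x ∈ Xs (j + 1) := by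
    intro j hj x hx
    exact eS_mapOther P.Astar P.A P.ψ P.δ P.triAstar (by omega) hx
  -- the key vanishing lemma
  have hK : ∀ i j : ℕ, i + j < P.d → Xs i ⊓ Y j = ⊥ := by
    intro i j hij
    have hKle : ∀ r, r < P.d → Xs r ⊓ Y (P.d - 1 - r) ≤
        ⨆ r ∈ Finset.range P.d, (Xs r ⊓ Y (P.d - 1 - r)) := fun r hr =>
      le_iSup₂ (f := fun r (_ : r ∈ Finset.range P.d) => Xs r ⊓ Y (P.d - 1 - r)) r
        (Finset.mem_range.2 hr)
    have hW0A : Submodule.map P.A (⨆ r ∈ Finset.range P.d, (Xs r ⊓ Y (P.d - 1 - r))) ≤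
        ⨆ r ∈ Finset.range P.d, (Xs r ⊓ Y (P.d - 1 - r)) := by
      rw [Submodule.map_iSup]
      refine iSup_le fun r => ?_
      rw [Submodule.map_iSup]
      refine iSup_le fun hr => ?_
      have hrd : r < P.d := Finset.mem_range.1 hr
      rintro _ ⟨x, hx, rfl⟩
      simp only [SetLike.mem_coe, Submodule.mem_inf] at hx
      obtain ⟨hx1, hx2⟩ := hx
      by_cases hs0 : P.d - 1 - r = 0
      · have hx2' : x ∈ P.A.eigenspace (P.θ 0) := by
          rw [hs0] at hx2; rwa [hYdef, eS_zero] at hx2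
        have hAx : P.A x = P.θ 0 • x := Module.End.mem_eigenspace_iff.1 hx2'
        rw [hAx]
        exact hKle r hrd (Submodule.smul_mem _ _ (Submodule.mem_inf.2 ⟨hx1, hx2⟩))
      · have hs1 : P.d - 1 - r = (P.d - 1 - r - 1) + 1 := by omega
        have hsubY : P.A x - P.θ (P.d - 1 - r) • x ∈ Y (P.d - 1 - r - 1) := by
          have hx2' : x ∈ Y ((P.d - 1 - r - 1) + 1) := by rw [← hs1]; exact hx2
          have h := eS_mapSub P.A P.θ (P.d - 1 - r - 1) hx2'
          rwa [← hs1] at h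
        have hsubX : P.A x - P.θ (P.d - 1 - r) • x ∈ Xs (r + 1) :=
          Submodule.sub_mem _ (hXup (by omega) hx1)
            (Submodule.smul_mem _ _ (eS_mono _ _ (by omega) hx1))
        have h1 : P.A x - P.θ (P.d - 1 - r) • x ∈
            ⨆ r ∈ Finset.range P.d, (Xs r ⊓ Y (P.d - 1 - r)) := by
          refine hKle (r + 1) (by omega) (Submodule.mem_inf.2 ⟨hsubX, ?_⟩)
          have he : P.d - 1 - (r + 1) = P.d - 1 - r - 1 := by omega
          rw [he]; exact hsubY
        have h2 : P.θ (P.d - 1 - r) • x ∈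
            ⨆ r ∈ Finset.range P.d, (Xs r ⊓ Y (P.d - 1 - r)) :=
          hKle r hrd (Submodule.smul_mem _ _ (Submodule.mem_inf.2 ⟨hx1, hx2⟩))
        have heq : P.A x = (P.A x - P.θ (P.d - 1 - r) • x) + P.θ (P.d - 1 - r) • x := by
          abel
        rw [heq]; exact Submodule.add_mem _ h1 h2
    have hW0As : Submodule.map P.Astar (⨆ r ∈ Finset.range P.d, (Xs r ⊓ Y (P.d - 1 - r))) ≤
        ⨆ r ∈ Finset.range P.d, (Xs r ⊓ Y (P.d - 1 - r)) := by
      rw [Submodule.map_iSup]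
      refine iSup_le fun r => ?_
      rw [Submodule.map_iSup]
      refine iSup_le fun hr => ?_
      have hrd : r < P.d := Finset.mem_range.1 hr
      rintro _ ⟨x, hx, rfl⟩
      simp only [SetLike.mem_coe, Submodule.mem_inf] at hx
      obtain ⟨hx1, hx2⟩ := hx
      by_cases hr0 : r = 0
      · have hx1' : x ∈ P.Astar.eigenspace (P.ψ 0) := by
          rw [hr0] at hx1; rwa [hXsdef, eS_zero] at hx1
        have hAx : P.Astar x = P.ψ 0 • x := Module.End.mem_eigenspace_iff.1 hx1'
        rw [hAx]
        exact hKle r hrd (Submodule.smul_mem _ _ (Submodule.mem_inf.2 ⟨hx1, hx2⟩))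
      · have hs1 : r = (r - 1) + 1 := by omega
        have hsubX : P.Astar x - P.ψ r • x ∈ Xs (r - 1) := by
          have hx1' : x ∈ Xs ((r - 1) + 1) := by rw [← hs1]; exact hx1
          have h := eS_mapSub P.Astar P.ψ (r - 1) hx1'
          rwa [← hs1] at h
        have hsubY : P.Astar x - P.ψ r • x ∈ Y (P.d - 1 - r + 1) :=
          Submodule.sub_mem _ (hYup (by omega) hx2)
            (Submodule.smul_mem _ _ (eS_mono _ _ (by omega) hx2))
        have h1 : P.Astar x - P.ψ r • x ∈
            ⨆ r ∈ Finset.range P.d, (Xs r ⊓ Y (P.d - 1 - r)) := by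
          refine hKle (r - 1) (by omega) (Submodule.mem_inf.2 ⟨hsubX, ?_⟩)
          have he : P.d - 1 - (r - 1) = P.d - 1 - r + 1 := by omega
          rw [he]; exact hsubY
        have h2 : P.ψ r • x ∈
            ⨆ r ∈ Finset.range P.d, (Xs r ⊓ Y (P.d - 1 - r)) :=
          hKle r hrd (Submodule.smul_mem _ _ (Submodule.mem_inf.2 ⟨hx1, hx2⟩))
        have heq : P.Astar x = (P.Astar x - P.ψ r • x) + P.ψ r • x := by abel
        rw [heq]; exact Submodule.add_mem _ h1 h2
    have hW0bot : (⨆ r ∈ Finset.range P.d, (Xs r ⊓ Y (P.d - 1 - r))) = ⊥ := by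
      rcases P.irred _ hW0A hW0As with h | h
      · exact h
      · exfalso
        have hle : (⨆ r ∈ Finset.range P.d, (Xs r ⊓ Y (P.d - 1 - r))) ≤ Xs (P.d - 1) := by
          refine iSup₂_le fun r hr => inf_le_left.trans (eS_mono _ _ ?_)
          have := Finset.mem_range.1 hr; omega
        have htop : Xs (P.d - 1) = ⊤ := top_unique (h ▸ hle)
        have hne := P.eigAstar_ne P.δ le_rfl
        have hdisj := P.Astar.eigenspaces_iSupIndep (P.ψ P.δ)
        have hle2 : Xs (P.d - 1) ≤ ⨆ (μ : ℂ) (_ : μ ≠ P.ψ P.δ), P.Astar.eigenspace μ := by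
          refine iSup₂_le fun k hk => ?_
          have hkd : k < P.d := by have := Finset.mem_range.1 hk; omega
          refine le_iSup₂ (f := fun μ (_ : μ ≠ P.ψ P.δ) => P.Astar.eigenspace μ) (P.ψ k) ?_
          intro heq
          have := P.ψ_inj k (by omega) P.δ le_rfl heq
          omega
        exact hne (hdisj.eq_bot_of_le ((le_top.trans htop.ge).trans hle2))
    have hle3 : Xs i ⊓ Y j ≤ ⨆ r ∈ Finset.range P.d, (Xs r ⊓ Y (P.d - 1 - r)) :=
      le_trans (inf_le_inf le_rfl (eS_mono _ _ (by omega))) (hKle i (by omega))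
    exact le_bot_iff.1 (hW0bot ▸ hle3)
  -- small helpers
  have hUle1 : ∀ j : ℕ, Udd P j ≤ Xs j := fun j => by rw [hUdd]; exact inf_le_left
  have hUle2 : ∀ j : ℕ, Udd P j ≤ Y (P.d - j) := fun j => by rw [hUdd]; exact inf_le_right
  -- totality
  have hUle : ∀ i : ℕ, i ≤ P.d → Udd P i ≤ ⨆ i : Fin (P.d + 1), Udd P (i : ℕ) := fun i hi =>
    le_iSup (fun i : Fin (P.d + 1) => Udd P (i : ℕ)) ⟨i, by omega⟩
  have hWtA : Submodule.map P.A (⨆ i : Fin (P.d + 1), Udd P (i : ℕ)) ≤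
      ⨆ i : Fin (P.d + 1), Udd P (i : ℕ) := by
    rw [Submodule.map_iSup]
    refine iSup_le fun i => ?_
    rintro _ ⟨x, hx, rfl⟩
    have hx0 : x ∈ Udd P (i : ℕ) := hx
    have hx' : x ∈ Xs (i : ℕ) ⊓ Y (P.d - (i : ℕ)) := by rw [← hUdd]; exact hx0
    obtain ⟨hx1, hx2⟩ := Submodule.mem_inf.1 hx'
    have hid : (i : ℕ) ≤ P.d := Nat.lt_succ_iff.1 i.isLt
    by_cases hi : (i : ℕ) = P.d
    · have h0 : P.d - (i : ℕ) = 0 := by omega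
      rw [h0] at hx2
      rw [hYdef, eS_zero] at hx2
      have hAx : P.A x = P.θ 0 • x := Module.End.mem_eigenspace_iff.1 hx2
      rw [hAx]
      exact hUle i hid (Submodule.smul_mem _ _ hx0)
    · have hi' : (i : ℕ) < P.d := lt_of_le_of_ne hid hi
      have hs1 : P.d - (i : ℕ) = (P.d - ((i : ℕ) + 1)) + 1 := by omega
      have hsubY : P.A x - P.θ (P.d - (i : ℕ)) • x ∈ Y (P.d - ((i : ℕ) + 1)) := by
        have hx2' : x ∈ Y ((P.d - ((i : ℕ) + 1)) + 1) := by rw [← hs1]; exact hx2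
        have h := eS_mapSub P.A P.θ _ hx2'
        rwa [← hs1] at h
      have hsubX : P.A x - P.θ (P.d - (i : ℕ)) • x ∈ Xs ((i : ℕ) + 1) :=
        Submodule.sub_mem _ (hXup hid hx1)
          (Submodule.smul_mem _ _ (eS_mono _ _ (by omega) hx1))
      have h1 : P.A x - P.θ (P.d - (i : ℕ)) • x ∈ ⨆ i : Fin (P.d + 1), Udd P (i : ℕ) := by
        refine hUle ((i : ℕ) + 1) (by omega) ?_
        rw [hUdd]
        exact Submodule.mem_inf.2 ⟨hsubX, hsubY⟩
      have h2 : P.θ (P.d - (i : ℕ)) • x ∈ ⨆ i : Fin (P.d + 1), Udd P (i : ℕ) :=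
        hUle i hid (Submodule.smul_mem _ _ hx0)
      have heq : P.A x = (P.A x - P.θ (P.d - (i : ℕ)) • x) + P.θ (P.d - (i : ℕ)) • x := by abel
      rw [heq]; exact Submodule.add_mem _ h1 h2
  have hWtAs : Submodule.map P.Astar (⨆ i : Fin (P.d + 1), Udd P (i : ℕ)) ≤
      ⨆ i : Fin (P.d + 1), Udd P (i : ℕ) := by
    rw [Submodule.map_iSup]
    refine iSup_le fun i => ?_
    rintro _ ⟨x, hx, rfl⟩
    have hx0 : x ∈ Udd P (i : ℕ) := hx
    have hx' : x ∈ Xs (i : ℕ) ⊓ Y (P.d - (i : ℕ)) := by rw [← hUdd]; exact hx0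
    obtain ⟨hx1, hx2⟩ := Submodule.mem_inf.1 hx'
    have hid : (i : ℕ) ≤ P.d := Nat.lt_succ_iff.1 i.isLt
    by_cases hi : (i : ℕ) = 0
    · rw [hi] at hx1
      rw [hXsdef, eS_zero] at hx1
      have hAx : P.Astar x = P.ψ 0 • x := Module.End.mem_eigenspace_iff.1 hx1
      rw [hAx]
      exact hUle i hid (Submodule.smul_mem _ _ hx0)
    · have hi1 : 1 ≤ (i : ℕ) := by omega
      have hs1 : (i : ℕ) = ((i : ℕ) - 1) + 1 := by omega
      have hsubX : P.Astar x - P.ψ (i : ℕ) • x ∈ Xs ((i : ℕ) - 1) := by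
        have hx1' : x ∈ Xs (((i : ℕ) - 1) + 1) := by rw [← hs1]; exact hx1
        have h := eS_mapSub P.Astar P.ψ _ hx1'
        rwa [← hs1] at h
      have hsubY : P.Astar x - P.ψ (i : ℕ) • x ∈ Y (P.d - ((i : ℕ) - 1)) := by
        have he : P.d - ((i : ℕ) - 1) = (P.d - (i : ℕ)) + 1 := by omega
        rw [he]
        exact Submodule.sub_mem _ (hYup (by omega) hx2)
          (Submodule.smul_mem _ _ (eS_mono _ _ (by omega) hx2))
      have h1 : P.Astar x - P.ψ (i : ℕ) • x ∈ ⨆ i : Fin (P.d + 1), Udd P (i : ℕ) := by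
        refine hUle ((i : ℕ) - 1) (by omega) ?_
        rw [hUdd]
        exact Submodule.mem_inf.2 ⟨hsubX, hsubY⟩
      have h2 : P.ψ (i : ℕ) • x ∈ ⨆ i : Fin (P.d + 1), Udd P (i : ℕ) :=
        hUle i hid (Submodule.smul_mem _ _ hx0)
      have heq : P.Astar x = (P.Astar x - P.ψ (i : ℕ) • x) + P.ψ (i : ℕ) • x := by abel
      rw [heq]; exact Submodule.add_mem _ h1 h2
  have hWtne : (⨆ i : Fin (P.d + 1), Udd P (i : ℕ)) ≠ ⊥ := by
    intro hbot
    have h0 : Udd P 0 ≤ ⨆ i : Fin (P.d + 1), Udd P (i : ℕ) := hUle 0 (Nat.zero_le _)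
    have hsub : P.Astar.eigenspace (P.ψ 0) ≤ Udd P 0 := by
      rw [hUdd]
      refine le_inf ?_ ?_
      · rw [hXsdef, eS_zero]
      · exact le_top.trans (by rw [Nat.sub_zero, hYtop])
    have := (hsub.trans h0).trans (le_of_eq hbot)
    exact P.eigAstar_ne 0 (Nat.zero_le _) (le_bot_iff.1 this)
  have hWtop : (⨆ i : Fin (P.d + 1), Udd P (i : ℕ)) = ⊤ :=
    (P.irred _ hWtA hWtAs).resolve_left hWtne
  refine ⟨?_, hWtop⟩
  -- independence
  intro i
  refine Submodule.disjoint_def.2 fun x hxi hxs => ?_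
  have hid : (i : ℕ) ≤ P.d := Nat.lt_succ_iff.1 i.isLt
  have hx' : x ∈ Xs (i : ℕ) ⊓ Y (P.d - (i : ℕ)) := by rw [← hUdd]; exact hxi
  obtain ⟨hxX, hxY⟩ := Submodule.mem_inf.1 hx'
  by_cases hd0 : P.d = 0
  · have hb : (⨆ (j : Fin (P.d + 1)) (_ : j ≠ i), Udd P (j : ℕ)) ≤ ⊥ := by
      refine iSup₂_le fun j hj => ?_
      exact absurd (Fin.ext (show (j : ℕ) = (i : ℕ) by
        have := j.isLt; have := i.isLt; omega)) hj
    exact (Submodule.mem_bot ℂ).1 (hb hxs)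
  have hd1 : 1 ≤ P.d := by omega
  by_cases hi0 : (i : ℕ) = 0
  · have hb : (⨆ (j : Fin (P.d + 1)) (_ : j ≠ i), Udd P (j : ℕ)) ≤ Y (P.d - 1) := by
      refine iSup₂_le fun j hj => ?_
      have hj1 : 1 ≤ (j : ℕ) := by
        rcases Nat.eq_zero_or_pos (j : ℕ) with h | h
        · exact absurd (Fin.ext (by omega)) hj
        · exact h
      exact (hUle2 j).trans (eS_mono _ _ (by omega))
    have hmem : x ∈ Xs 0 ⊓ Y (P.d - 1) := by
      rw [hi0] at hxX
      exact Submodule.mem_inf.2 ⟨hxX, hb hxs⟩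
    rw [hK 0 (P.d - 1) (by omega)] at hmem
    exact (Submodule.mem_bot ℂ).1 hmem
  by_cases hiD : (i : ℕ) = P.d
  · have hb : (⨆ (j : Fin (P.d + 1)) (_ : j ≠ i), Udd P (j : ℕ)) ≤ Xs (P.d - 1) := by
      refine iSup₂_le fun j hj => ?_
      have hj1 : (j : ℕ) < P.d := by
        have hjd : (j : ℕ) ≤ P.d := Nat.lt_succ_iff.1 j.isLt
        rcases lt_or_eq_of_le hjd with h | h
        · exact h
        · exact absurd (Fin.ext (by omega)) hj
      exact (hUle1 j).trans (eS_mono _ _ (by omega))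
    have hmem : x ∈ Xs (P.d - 1) ⊓ Y (P.d - (i : ℕ)) :=
      Submodule.mem_inf.2 ⟨hb hxs, hxY⟩
    rw [hK (P.d - 1) (P.d - (i : ℕ)) (by omega)] at hmem
    exact (Submodule.mem_bot ℂ).1 hmem
  · have hi1 : 1 ≤ (i : ℕ) := by omega
    have hiD' : (i : ℕ) < P.d := by omega
    have hb : (⨆ (j : Fin (P.d + 1)) (_ : j ≠ i), Udd P (j : ℕ)) ≤
        Xs ((i : ℕ) - 1) ⊔ Y (P.d - (i : ℕ) - 1) := by
      refine iSup₂_le fun j hj => ?_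
      have hjne : (j : ℕ) ≠ (i : ℕ) := fun h => hj (Fin.ext h)
      rcases lt_or_gt_of_ne hjne with h | h
      · exact le_sup_of_le_left ((hUle1 j).trans (eS_mono _ _ (by omega)))
      · exact le_sup_of_le_right ((hUle2 j).trans (eS_mono _ _ (by omega)))
    obtain ⟨a, ha, b, hb2, hab⟩ := Submodule.mem_sup.1 (hb hxs)
    have hbeq : b = x - a := by rw [← hab]; abel
    have hbX : b ∈ Xs (i : ℕ) := by
      rw [hbeq]
      exact Submodule.sub_mem _ hxX (eS_mono _ _ (by omega) ha)
    have hb0 : b = 0 := by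
      have hmem : b ∈ Xs (i : ℕ) ⊓ Y (P.d - (i : ℕ) - 1) := Submodule.mem_inf.2 ⟨hbX, hb2⟩
      rw [hK _ _ (by omega)] at hmem
      exact (Submodule.mem_bot ℂ).1 hmem
    have hxa : x = a := by rw [← hab, hb0, add_zero]
    have hmem : x ∈ Xs ((i : ℕ) - 1) ⊓ Y (P.d - (i : ℕ)) :=
      Submodule.mem_inf.2 ⟨hxa ▸ ha, hxY⟩
    rw [hK _ _ (by omega)] at hmem
    exact (Submodule.mem_bot ℂ).1 hmem

end
end

section
/- Let A, A* be a tridiagonal pair on V with diameter d. Then V = U^{↑↓}_0 + U^{↑↓}_1 + ⋯ + U^{↑↓}_d is a direct sum, where U^{↑↓}_i = (V*_{d−i} + ⋯ + V*_d) ∩ (V_0 + ⋯ + V_{d−i}) for 0 ≤ i ≤ d. -/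
noncomputable section

open Module

section Aux

variable {V : Type*} [AddCommGroup V] [Module ℂ V]

lemma map_biSup_le {f : Module.End ℂ V} {s : Finset ℕ} {E : ℕ → Submodule ℂ V}
    {N : Submodule ℂ V} (h : ∀ k ∈ s, Submodule.map f (E k) ≤ N) :
    Submodule.map f (⨆ k ∈ s, E k) ≤ N := by
  rw [Submodule.map_iSup]
  exact iSup_le fun k => by rw [Submodule.map_iSup]; exact iSup_le fun hk => h k hk

lemma map_self_eigen (f : Module.End ℂ V) (μ : ℂ) :
    Submodule.map f (f.eigenspace μ) ≤ f.eigenspace μ := by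
  rintro x ⟨y, hy, rfl⟩
  rw [SetLike.mem_coe, Module.End.mem_eigenspace_iff] at hy
  rw [Module.End.mem_eigenspace_iff, hy, map_smul, hy]

lemma map_sub_smul_eigen (f : Module.End ℂ V) (μ ν : ℂ) :
    Submodule.map (f - ν • 1) (f.eigenspace μ) ≤ f.eigenspace μ := by
  rintro x ⟨y, hy, rfl⟩
  rw [SetLike.mem_coe, Module.End.mem_eigenspace_iff] at hy
  rw [Module.End.mem_eigenspace_iff]
  have h1 : (f - ν • 1) y = (μ - ν) • y := by
    simp [LinearMap.sub_apply, LinearMap.smul_apply, Module.End.one_apply, hy, sub_smul]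
  rw [h1, map_smul, hy, smul_smul, smul_smul, mul_comm]

lemma map_sub_smul_eigen_self (f : Module.End ℂ V) (μ : ℂ) :
    Submodule.map (f - μ • 1) (f.eigenspace μ) = ⊥ := by
  rw [Submodule.eq_bot_iff]
  rintro x ⟨y, hy, rfl⟩
  rw [SetLike.mem_coe, Module.End.mem_eigenspace_iff] at hy
  simp [LinearMap.sub_apply, hy]

namespace TDPair

variable (P : TDPair V)

/-- `Ssub P j = V_0 + ⋯ + V_{j-1}` (so `Ssub P 0 = ⊥`). -/
def Ssub (j : ℕ) : Submodule ℂ V := ⨆ k ∈ Finset.range j, P.A.eigenspace (P.θ k)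

/-- `Tsub P j = V*_j + ⋯ + V*_d` (so `Tsub P (d+1) = ⊥`). -/
def Tsub (j : ℕ) : Submodule ℂ V := ⨆ k ∈ Finset.Icc j P.d, P.Astar.eigenspace (P.ψ k)

lemma Ssub_mono {j j' : ℕ} (h : j ≤ j') : P.Ssub j ≤ P.Ssub j' :=
  biSup_mono fun k hk => Finset.mem_range.mpr (lt_of_lt_of_le (Finset.mem_range.mp hk) h)

lemma Tsub_anti {j j' : ℕ} (h : j ≤ j') : P.Tsub j' ≤ P.Tsub j :=
  biSup_mono fun k hk => by
    rw [Finset.mem_Icc] at *; exact ⟨h.trans hk.1, hk.2⟩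

lemma Ssub_zero : P.Ssub 0 = ⊥ := by simp [Ssub]

lemma Ssub_top : P.Ssub (P.d + 1) = ⊤ := P.diagA

lemma Tsub_bot {j : ℕ} (h : P.d < j) : P.Tsub j = ⊥ := by
  rw [Tsub, Finset.Icc_eq_empty (by omega)]; simp

lemma Tsub_zero (hdd : P.δ = P.d) : P.Tsub 0 = ⊤ := by
  rw [Tsub, show Finset.Icc 0 P.d = Finset.range (P.d + 1) from by
    ext x; simp [Nat.lt_succ_iff], ← hdd]
  exact P.diagAstar

lemma eigen_le_Ssub {m j : ℕ} (h : m < j) : P.A.eigenspace (P.θ m) ≤ P.Ssub j :=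
  le_iSup₂ (f := fun k (_ : k ∈ Finset.range j) => P.A.eigenspace (P.θ k)) m
    (Finset.mem_range.mpr h)

lemma eigen_le_Tsub {m j : ℕ} (h : j ≤ m) (h' : m ≤ P.d) :
    P.Astar.eigenspace (P.ψ m) ≤ P.Tsub j := by
  exact le_iSup₂ (f := fun k (_ : k ∈ Finset.Icc j P.d) => P.Astar.eigenspace (P.ψ k)) m
    (Finset.mem_Icc.mpr ⟨h, h'⟩)

lemma evSp_le_Ssub {m j : ℕ} (h : m < j) : evSp P.A P.θ P.d m ≤ P.Ssub j := by
  rw [evSp]; split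
  · exact P.eigen_le_Ssub h
  · exact bot_le

lemma evSp_le_Tsub {m j : ℕ} (h : j ≤ m) : evSp P.Astar P.ψ P.d m ≤ P.Tsub j := by
  rw [evSp]; split
  · exact P.eigen_le_Tsub h (by assumption)
  · exact bot_le

lemma hSA (j : ℕ) : Submodule.map P.A (P.Ssub j) ≤ P.Ssub j :=
  map_biSup_le fun k hk =>
    (map_self_eigen _ _).trans (P.eigen_le_Ssub (Finset.mem_range.mp hk))

lemma hSAθ (j : ℕ) : Submodule.map (P.A - P.θ j • 1) (P.Ssub (j + 1)) ≤ P.Ssub j :=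
  map_biSup_le fun k hk => by
    rcases eq_or_ne k j with rfl | hne
    · rw [map_sub_smul_eigen_self]; exact bot_le
    · have : k < j := by have := Finset.mem_range.mp hk; omega
      exact (map_sub_smul_eigen _ _ _).trans (P.eigen_le_Ssub this)

lemma hSB {j : ℕ} (hj : j ≤ P.d + 1) :
    Submodule.map P.Astar (P.Ssub j) ≤ P.Ssub (j + 1) :=
  map_biSup_le fun k hk => by
    have hk' : k < j := Finset.mem_range.mp hk
    have hkd : k ≤ P.d := by omega
    rw [show P.A.eigenspace (P.θ k) = evSp P.A P.θ P.d k from (if_pos hkd).symm]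
    exact (P.triA k hkd).trans (sup_le (sup_le (P.evSp_le_Ssub (by omega))
      (P.evSp_le_Ssub (by omega))) (P.evSp_le_Ssub (by omega)))

lemma hTB (j : ℕ) : Submodule.map P.Astar (P.Tsub j) ≤ P.Tsub j :=
  map_biSup_le fun k hk => by
    rw [Finset.mem_Icc] at hk
    exact (map_self_eigen _ _).trans (P.eigen_le_Tsub hk.1 hk.2)

lemma hTBψ (j : ℕ) : Submodule.map (P.Astar - P.ψ j • 1) (P.Tsub j) ≤ P.Tsub (j + 1) :=
  map_biSup_le fun k hk => by
    rw [Finset.mem_Icc] at hk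
    rcases eq_or_ne k j with rfl | hne
    · rw [map_sub_smul_eigen_self]; exact bot_le
    · exact (map_sub_smul_eigen _ _ _).trans (P.eigen_le_Tsub (by omega) hk.2)

lemma hTA (hdd : P.δ = P.d) (j : ℕ) :
    Submodule.map P.A (P.Tsub (j + 1)) ≤ P.Tsub j :=
  map_biSup_le fun k hk => by
    rw [Finset.mem_Icc] at hk
    have h := P.triAstar k (by omega)
    rw [hdd] at h
    rw [show P.Astar.eigenspace (P.ψ k) = evSp P.Astar P.ψ P.d k from (if_pos hk.2).symm]
    exact h.trans (sup_le (sup_le (P.evSp_le_Tsub (by omega))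
      (P.evSp_le_Tsub (by omega))) (P.evSp_le_Tsub (by omega)))

lemma hST (hdd : P.δ = P.d) : ∀ j, P.Ssub j ⊓ P.Tsub j = ⊥ := by
  set Z : Submodule ℂ V :=
    ⨆ j ∈ Finset.range (P.d + 1), (P.Ssub (j + 1) ⊓ P.Tsub (j + 1)) with hZ
  have hWZ : ∀ j ≤ P.d + 1, P.Ssub (j + 1) ⊓ P.Tsub (j + 1) ≤ Z := by
    intro j hj
    rcases Nat.lt_or_ge j (P.d + 1) with h | h
    · exact le_iSup₂ (f := fun j (_ : j ∈ Finset.range (P.d + 1)) =>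
        P.Ssub (j + 1) ⊓ P.Tsub (j + 1)) j (Finset.mem_range.mpr h)
    · rw [P.Tsub_bot (by omega)]; simp
  have hWZ' : ∀ j ≤ P.d + 1, P.Ssub j ⊓ P.Tsub j ≤ Z := by
    intro j hj
    cases j with
    | zero => rw [P.Ssub_zero]; simp
    | succ m => exact hWZ m (by omega)
  have hAZ : Submodule.map P.A Z ≤ Z := by
    rw [hZ, Submodule.map_iSup]
    refine iSup_le fun j => ?_
    rw [Submodule.map_iSup]
    refine iSup_le fun hj => ?_
    have hjd : j ≤ P.d := by have := Finset.mem_range.mp hj; omega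
    rintro x ⟨y, hy, rfl⟩
    rw [SetLike.mem_coe, Submodule.mem_inf] at hy
    obtain ⟨hyS, hyT⟩ := hy
    have h1 : (P.A - P.θ j • 1) y ∈ P.Ssub j := P.hSAθ j (Submodule.mem_map_of_mem hyS)
    have h2 : P.A y ∈ P.Tsub j := P.hTA hdd j (Submodule.mem_map_of_mem hyT)
    have h3 : (P.A - P.θ j • 1) y ∈ P.Tsub j := by
      have e : (P.A - P.θ j • 1) y = P.A y - P.θ j • y := by
        simp [LinearMap.sub_apply, LinearMap.smul_apply, Module.End.one_apply]
      rw [e]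
      exact sub_mem h2 (P.Tsub_anti (Nat.le_succ j) (Submodule.smul_mem _ _ hyT))
    have h4 : (P.A - P.θ j • 1) y ∈ Z :=
      hWZ' j (by omega) (Submodule.mem_inf.mpr ⟨h1, h3⟩)
    have h5 : P.θ j • y ∈ Z := hWZ j (by omega)
      (Submodule.mem_inf.mpr ⟨Submodule.smul_mem _ _ hyS, Submodule.smul_mem _ _ hyT⟩)
    have h6 : P.A y = (P.A - P.θ j • 1) y + P.θ j • y := by
      simp [LinearMap.sub_apply, LinearMap.smul_apply, Module.End.one_apply]
    rw [h6]
    exact Z.add_mem h4 h5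
  have hBZ : Submodule.map P.Astar Z ≤ Z := by
    rw [hZ, Submodule.map_iSup]
    refine iSup_le fun j => ?_
    rw [Submodule.map_iSup]
    refine iSup_le fun hj => ?_
    have hjd : j ≤ P.d := by have := Finset.mem_range.mp hj; omega
    rintro x ⟨y, hy, rfl⟩
    rw [SetLike.mem_coe, Submodule.mem_inf] at hy
    obtain ⟨hyS, hyT⟩ := hy
    have h1 : (P.Astar - P.ψ (j + 1) • 1) y ∈ P.Tsub (j + 2) :=
      P.hTBψ (j + 1) (Submodule.mem_map_of_mem hyT)
    have h2 : P.Astar y ∈ P.Ssub (j + 2) := P.hSB (by omega) (Submodule.mem_map_of_mem hyS)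
    have h3 : (P.Astar - P.ψ (j + 1) • 1) y ∈ P.Ssub (j + 2) := by
      have e : (P.Astar - P.ψ (j + 1) • 1) y = P.Astar y - P.ψ (j + 1) • y := by
        simp [LinearMap.sub_apply, LinearMap.smul_apply, Module.End.one_apply]
      rw [e]
      exact sub_mem h2 (P.Ssub_mono (Nat.le_succ _) (Submodule.smul_mem _ _ hyS))
    have h4 : (P.Astar - P.ψ (j + 1) • 1) y ∈ Z :=
      hWZ (j + 1) (by omega) (Submodule.mem_inf.mpr ⟨h3, h1⟩)
    have h5 : P.ψ (j + 1) • y ∈ Z := hWZ j (by omega)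
      (Submodule.mem_inf.mpr ⟨Submodule.smul_mem _ _ hyS, Submodule.smul_mem _ _ hyT⟩)
    have h6 : P.Astar y = (P.Astar - P.ψ (j + 1) • 1) y + P.ψ (j + 1) • y := by
      simp [LinearMap.sub_apply, LinearMap.smul_apply, Module.End.one_apply]
    rw [h6]
    exact Z.add_mem h4 h5
  rcases P.irred Z hAZ hBZ with hbot | htop
  · intro j
    by_cases h : j ≤ P.d + 1
    · exact le_bot_iff.mp (hbot ▸ hWZ' j h)
    · rw [P.Tsub_bot (by omega)]; simp
  · exfalso
    have hZT : Z ≤ P.Tsub 1 :=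
      iSup_le fun j => iSup_le fun _ => inf_le_right.trans (P.Tsub_anti (by omega))
    have hT1 : P.Tsub 1 = ⊤ := top_unique (htop ▸ hZT)
    have hdisj : Disjoint (P.Astar.eigenspace (P.ψ 0))
        (⨆ ν ≠ P.ψ 0, P.Astar.eigenspace ν) := P.Astar.eigenspaces_iSupIndep (P.ψ 0)
    have hle2 : P.Tsub 1 ≤ ⨆ ν ≠ P.ψ 0, P.Astar.eigenspace ν := by
      refine iSup_le fun k => iSup_le fun hk => ?_
      rw [Finset.mem_Icc] at hk
      have hne : P.ψ k ≠ P.ψ 0 := fun h => by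
        have := P.ψ_inj k (by omega) 0 (by omega) h; omega
      exact le_iSup₂ (f := fun ν (_ : ν ≠ P.ψ 0) => P.Astar.eigenspace ν) _ hne
    have hsub : P.Astar.eigenspace (P.ψ 0) ≤ ⨆ ν ≠ P.ψ 0, P.Astar.eigenspace ν :=
      le_trans (hT1 ▸ le_top) hle2
    have hbot0 : P.Astar.eigenspace (P.ψ 0) = ⊥ := by
      calc P.Astar.eigenspace (P.ψ 0)
          = P.Astar.eigenspace (P.ψ 0) ⊓ ⨆ ν ≠ P.ψ 0, P.Astar.eigenspace ν :=
            (inf_eq_left.mpr hsub).symm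
        _ = ⊥ := disjoint_iff.mp hdisj
    exact P.eigAstar_ne 0 (Nat.zero_le _) hbot0

end TDPair

end Aux

/-- The `(↓,↓)/(↑,↓)/(↓,↑)/(↑,↑)`-split decomposition:
`V = U_0 + U_1 + ⋯ + U_d` is a direct sum. -/
theorem tdpair_split_ud {V : Type*} [AddCommGroup V] [Module ℂ V]
    [FiniteDimensional ℂ V] (hV : 0 < Module.finrank ℂ V) (P : TDPair V)
    (hdd : P.δ = P.d) :
    iSupIndep (fun i : Fin (P.d + 1) => Uud P i) ∧
      (⨆ i : Fin (P.d + 1), Uud P i) = ⊤ := by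
  have hUud : ∀ i : ℕ, Uud P i = P.Tsub (P.d - i) ⊓ P.Ssub (P.d - i + 1) := fun i => rfl
  constructor
  · rw [iSupIndep_def]
    intro i
    rw [Submodule.disjoint_def]
    intro x hxi hxsup
    rw [hUud, Submodule.mem_inf] at hxi
    obtain ⟨hxT, hxS⟩ := hxi
    have hle : (⨆ j, ⨆ (_ : j ≠ i), Uud P (j : Fin (P.d + 1))) ≤
        P.Tsub (P.d - i + 1) ⊔ P.Ssub (P.d - i) := by
      refine iSup_le fun j => iSup_le fun hj => ?_
      rcases lt_or_gt_of_ne hj with h | h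
      · refine le_sup_of_le_left ?_
        rw [hUud]
        refine inf_le_left.trans (P.Tsub_anti ?_)
        have h1 : (j : ℕ) < i := h
        have h2 : (i : ℕ) ≤ P.d := Nat.lt_succ_iff.mp i.isLt
        omega
      · refine le_sup_of_le_right ?_
        rw [hUud]
        refine inf_le_right.trans (P.Ssub_mono ?_)
        have h1 : (i : ℕ) < j := h
        have h2 : (j : ℕ) ≤ P.d := Nat.lt_succ_iff.mp j.isLt
        omega
    have hx2 := hle hxsup
    rw [Submodule.mem_sup] at hx2
    obtain ⟨y, hy, z, hz, hyz⟩ := hx2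
    have hyS : y ∈ P.Ssub (P.d - i + 1) := by
      have e : y = x - z := by rw [← hyz]; abel
      rw [e]
      exact sub_mem hxS (P.Ssub_mono (Nat.le_succ _) hz)
    have hy0 : y = 0 := by
      have hmem : y ∈ P.Ssub (P.d - i + 1) ⊓ P.Tsub (P.d - i + 1) :=
        Submodule.mem_inf.mpr ⟨hyS, hy⟩
      rw [P.hST hdd] at hmem
      simpa using hmem
    have hxz : x = z := by rw [← hyz, hy0, zero_add]
    have hmem : x ∈ P.Ssub (P.d - i) ⊓ P.Tsub (P.d - i) :=
      Submodule.mem_inf.mpr ⟨hxz ▸ hz, hxT⟩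
    rw [P.hST hdd] at hmem
    simpa using hmem
  · set W := ⨆ i : Fin (P.d + 1), Uud P i with hW
    have hUW : ∀ i : Fin (P.d + 1), Uud P (i : ℕ) ≤ W := fun i => by
      rw [hW]; exact le_iSup (fun i : Fin (P.d + 1) => Uud P (i : ℕ)) i
    have hAW : Submodule.map P.A W ≤ W := by
      rw [hW, Submodule.map_iSup]
      refine iSup_le fun i => ?_
      rintro x ⟨y, hy, rfl⟩
      rw [SetLike.mem_coe, hUud, Submodule.mem_inf] at hy
      obtain ⟨hyT, hyS⟩ := hy
      have hid : (i : ℕ) ≤ P.d := Nat.lt_succ_iff.mp i.isLt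
      by_cases hi : (i : ℕ) < P.d
      · have h1 : (P.A - P.θ (P.d - i) • 1) y ∈ P.Ssub (P.d - i) :=
          P.hSAθ _ (Submodule.mem_map_of_mem hyS)
        have h2 : P.A y ∈ P.Tsub (P.d - i - 1) := by
          refine P.hTA hdd (P.d - i - 1) (Submodule.mem_map_of_mem ?_)
          rw [show P.d - (i : ℕ) - 1 + 1 = P.d - i from by omega]
          exact hyT
        have h3 : (P.A - P.θ (P.d - i) • 1) y ∈ P.Tsub (P.d - i - 1) := by
          have e : (P.A - P.θ (P.d - i) • 1) y = P.A y - P.θ (P.d - i) • y := by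
            simp [LinearMap.sub_apply, LinearMap.smul_apply, Module.End.one_apply]
          rw [e]
          exact sub_mem h2 (P.Tsub_anti (by omega) (Submodule.smul_mem _ _ hyT))
        have h4 : (P.A - P.θ (P.d - i) • 1) y ∈ Uud P ((i : ℕ) + 1) := by
          rw [hUud]
          refine Submodule.mem_inf.mpr ⟨?_, ?_⟩
          · rw [show P.d - ((i : ℕ) + 1) = P.d - i - 1 from by omega]
            exact h3
          · rw [show P.d - ((i : ℕ) + 1) + 1 = P.d - i from by omega]
            exact h1
        have h6 : P.A y = (P.A - P.θ (P.d - i) • 1) y + P.θ (P.d - i) • y := by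
          simp [LinearMap.sub_apply, LinearMap.smul_apply, Module.End.one_apply]
        rw [h6]
        refine W.add_mem (hUW ⟨(i : ℕ) + 1, by omega⟩ h4) (hUW i ?_)
        rw [hUud]
        exact Submodule.mem_inf.mpr
          ⟨Submodule.smul_mem _ _ hyT, Submodule.smul_mem _ _ hyS⟩
      · have h0 : (P.A - P.θ (P.d - i) • 1) y ∈ P.Ssub (P.d - i) :=
          P.hSAθ _ (Submodule.mem_map_of_mem hyS)
        have h00 : (P.A - P.θ (P.d - i) • 1) y = 0 := by
          rw [show P.Ssub (P.d - (i : ℕ)) = ⊥ from by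
            rw [show P.d - (i : ℕ) = 0 from by omega]; exact P.Ssub_zero] at h0
          simpa using h0
        have e : (P.A - P.θ (P.d - i) • 1) y = P.A y - P.θ (P.d - i) • y := by
          simp [LinearMap.sub_apply, LinearMap.smul_apply, Module.End.one_apply]
        rw [e] at h00
        rw [sub_eq_zero.mp h00]
        refine hUW i ?_
        rw [hUud]
        exact Submodule.mem_inf.mpr
          ⟨Submodule.smul_mem _ _ hyT, Submodule.smul_mem _ _ hyS⟩
    have hBW : Submodule.map P.Astar W ≤ W := by
      rw [hW, Submodule.map_iSup]
      refine iSup_le fun i => ?_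
      rintro x ⟨y, hy, rfl⟩
      rw [SetLike.mem_coe, hUud, Submodule.mem_inf] at hy
      obtain ⟨hyT, hyS⟩ := hy
      have hid : (i : ℕ) ≤ P.d := Nat.lt_succ_iff.mp i.isLt
      by_cases hi : 0 < (i : ℕ)
      · have h1 : (P.Astar - P.ψ (P.d - i) • 1) y ∈ P.Tsub (P.d - i + 1) :=
          P.hTBψ _ (Submodule.mem_map_of_mem hyT)
        have h2 : P.Astar y ∈ P.Ssub (P.d - i + 2) :=
          P.hSB (by omega) (Submodule.mem_map_of_mem hyS)
        have h3 : (P.Astar - P.ψ (P.d - i) • 1) y ∈ P.Ssub (P.d - i + 2) := by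
          have e : (P.Astar - P.ψ (P.d - i) • 1) y = P.Astar y - P.ψ (P.d - i) • y := by
            simp [LinearMap.sub_apply, LinearMap.smul_apply, Module.End.one_apply]
          rw [e]
          exact sub_mem h2 (P.Ssub_mono (by omega) (Submodule.smul_mem _ _ hyS))
        have h4 : (P.Astar - P.ψ (P.d - i) • 1) y ∈ Uud P ((i : ℕ) - 1) := by
          rw [hUud]
          refine Submodule.mem_inf.mpr ⟨?_, ?_⟩
          · rw [show P.d - ((i : ℕ) - 1) = P.d - i + 1 from by omega]
            exact h1
          · rw [show P.d - ((i : ℕ) - 1) + 1 = P.d - i + 2 from by omega]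
            exact h3
        have h6 : P.Astar y =
            (P.Astar - P.ψ (P.d - i) • 1) y + P.ψ (P.d - i) • y := by
          simp [LinearMap.sub_apply, LinearMap.smul_apply, Module.End.one_apply]
        rw [h6]
        refine W.add_mem (hUW ⟨(i : ℕ) - 1, by omega⟩ h4) (hUW i ?_)
        rw [hUud]
        exact Submodule.mem_inf.mpr
          ⟨Submodule.smul_mem _ _ hyT, Submodule.smul_mem _ _ hyS⟩
      · have h1 : (P.Astar - P.ψ (P.d - i) • 1) y ∈ P.Tsub (P.d - i + 1) :=
          P.hTBψ _ (Submodule.mem_map_of_mem hyT)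
        have h00 : (P.Astar - P.ψ (P.d - i) • 1) y = 0 := by
          rw [P.Tsub_bot (by omega)] at h1
          simpa using h1
        have e : (P.Astar - P.ψ (P.d - i) • 1) y = P.Astar y - P.ψ (P.d - i) • y := by
          simp [LinearMap.sub_apply, LinearMap.smul_apply, Module.End.one_apply]
        rw [e] at h00
        rw [sub_eq_zero.mp h00]
        refine hUW i ?_
        rw [hUud]
        exact Submodule.mem_inf.mpr
          ⟨Submodule.smul_mem _ _ hyT, Submodule.smul_mem _ _ hyS⟩
    have hU0 : Uud P ((0 : Fin (P.d + 1)) : ℕ) ≠ ⊥ := by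
      rw [Fin.val_zero, hUud, Nat.sub_zero, P.Ssub_top, inf_top_eq]
      have e : P.Tsub P.d = P.Astar.eigenspace (P.ψ P.d) := by
        rw [TDPair.Tsub, Finset.Icc_self]
        simp
      rw [e]
      exact P.eigAstar_ne P.d (by omega)
    have hWne : W ≠ ⊥ := fun h => hU0 (le_bot_iff.mp (h ▸ hUW 0))
    rcases P.irred W hAW hBW with h | h
    · exact absurd h hWne
    · exact h

end
end

section
/- Let A, A* be a tridiagonal pair on V with diameter d. Then V = U^{↑↑}_0 + U^{↑↑}_1 + ⋯ + U^{↑↑}_d is a direct sum, where U^{↑↑}_i = (V*_{d−i} + ⋯ + V*_d) ∩ (V_i + ⋯ + V_d) for 0 ≤ i ≤ d. -/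
noncomputable section

open Module

namespace TDPairAux

variable {V : Type*} [AddCommGroup V] [Module ℂ V]

lemma eig_sub_smul_apply {B : Module.End ℂ V} {μ : ℂ} (c : ℂ) {x : V}
    (h : x ∈ B.eigenspace μ) : (B - c • 1) x = (μ - c) • x := by
  rw [Module.End.mem_eigenspace_iff] at h
  simp [h, sub_smul]

/-- The space `F i = V*_{d-i} + ⋯ + V*_d`. -/
def Fs (P : TDPair V) (i : ℕ) : Submodule ℂ V :=
  ⨆ k ∈ Finset.Icc (P.d - i) P.d, P.Astar.eigenspace (P.ψ k)

/-- The space `Fp i = V*_{d-i+1} + ⋯ + V*_d`. -/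
def Fp (P : TDPair V) (i : ℕ) : Submodule ℂ V :=
  ⨆ k ∈ Finset.Icc (P.d - i + 1) P.d, P.Astar.eigenspace (P.ψ k)

/-- The space `G i = V_i + ⋯ + V_d`. -/
def Gs (P : TDPair V) (i : ℕ) : Submodule ℂ V :=
  ⨆ k ∈ Finset.Icc i P.d, P.A.eigenspace (P.θ k)

lemma Uuu_eq (P : TDPair V) (i : ℕ) : Uuu P i = Fs P i ⊓ Gs P i := rfl

lemma Fs_mono (P : TDPair V) {i j : ℕ} (h : i ≤ j) : Fs P i ≤ Fs P j := by
  apply biSup_mono; intro k hk; simp only [Finset.mem_Icc] at *; omega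

lemma Fp_le (P : TDPair V) (i : ℕ) : Fp P i ≤ Fs P i := by
  apply biSup_mono; intro k hk; simp only [Finset.mem_Icc] at *; omega

lemma Fp_le_pred (P : TDPair V) (i : ℕ) : Fp P i ≤ Fs P (i - 1) := by
  apply biSup_mono; intro k hk; simp only [Finset.mem_Icc] at *; omega

lemma Fp_zero (P : TDPair V) : Fp P 0 = ⊥ := by
  rw [Fp]
  have : Finset.Icc (P.d - 0 + 1) P.d = ∅ := by
    apply Finset.Icc_eq_empty; omega
  simp [this]

lemma Gs_anti (P : TDPair V) {i j : ℕ} (h : i ≤ j) : Gs P j ≤ Gs P i := by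
  apply biSup_mono; intro k hk; simp only [Finset.mem_Icc] at *; omega

lemma Gs_bot (P : TDPair V) {i : ℕ} (h : P.d < i) : Gs P i = ⊥ := by
  rw [Gs]
  have : Finset.Icc i P.d = ∅ := by apply Finset.Icc_eq_empty; omega
  simp [this]

lemma Fs_top (P : TDPair V) (hdd : P.δ = P.d) {i : ℕ} (h : P.d ≤ i) : Fs P i = ⊤ := by
  have hicc : Finset.Icc (P.d - i) P.d = Finset.range (P.d + 1) := by
    ext k; simp only [Finset.mem_Icc, Finset.mem_range]; omega
  rw [Fs, hicc, ← hdd, P.diagAstar]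

lemma le_Fs (P : TDPair V) {k i : ℕ} (h1 : P.d - i ≤ k) (h2 : k ≤ P.d) :
    P.Astar.eigenspace (P.ψ k) ≤ Fs P i := by
  rw [Fs]
  exact le_biSup (fun k => P.Astar.eigenspace (P.ψ k)) (Finset.mem_Icc.2 ⟨h1, h2⟩)

lemma le_Fp (P : TDPair V) {k i : ℕ} (h1 : P.d - i + 1 ≤ k) (h2 : k ≤ P.d) :
    P.Astar.eigenspace (P.ψ k) ≤ Fp P i := by
  rw [Fp]
  exact le_biSup (fun k => P.Astar.eigenspace (P.ψ k)) (Finset.mem_Icc.2 ⟨h1, h2⟩)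

lemma le_Gs (P : TDPair V) {k i : ℕ} (h1 : i ≤ k) (h2 : k ≤ P.d) :
    P.A.eigenspace (P.θ k) ≤ Gs P i := by
  rw [Gs]
  exact le_biSup (fun k => P.A.eigenspace (P.θ k)) (Finset.mem_Icc.2 ⟨h1, h2⟩)

lemma evSpA_le_Gs (P : TDPair V) {m i : ℕ} (h : i ≤ m) :
    evSp P.A P.θ P.d m ≤ Gs P i := by
  rw [evSp]; split
  · exact le_Gs P h ‹_›
  · exact bot_le

lemma evSpAstar_le_Fs (P : TDPair V) (hdd : P.δ = P.d) {m i : ℕ} (h : P.d - i ≤ m) :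
    evSp P.Astar P.ψ P.δ m ≤ Fs P i := by
  rw [evSp, hdd]; split
  · exact le_Fs P h ‹_›
  · exact bot_le

/-- `(A - θ i) G_i ⊆ G_{i+1}`. -/
lemma mapA_G (P : TDPair V) (i : ℕ) :
    Submodule.map (P.A - P.θ i • 1) (Gs P i) ≤ Gs P (i + 1) := by
  rw [Gs]
  simp only [Submodule.map_iSup]
  apply iSup₂_le; intro k hk
  simp only [Finset.mem_Icc] at hk
  rintro _ ⟨x, hx, rfl⟩
  rcases eq_or_lt_of_le hk.1 with rfl | hlt
  · rw [eig_sub_smul_apply _ hx, sub_self, zero_smul]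
    exact Submodule.zero_mem _
  · rw [eig_sub_smul_apply _ hx]
    exact le_Gs P hlt hk.2 (Submodule.smul_mem _ _ hx)

/-- `A* G_i ⊆ G_{i-1}`. -/
lemma mapAstar_G (P : TDPair V) (i : ℕ) :
    Submodule.map P.Astar (Gs P i) ≤ Gs P (i - 1) := by
  rw [Gs]
  simp only [Submodule.map_iSup]
  apply iSup₂_le; intro k hk
  simp only [Finset.mem_Icc] at hk
  have heq : evSp P.A P.θ P.d k = P.A.eigenspace (P.θ k) := if_pos hk.2
  rw [← heq]
  refine (P.triA k hk.2).trans ?_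
  refine sup_le (sup_le ?_ ?_) ?_ <;> apply evSpA_le_Gs <;> omega

/-- `A F_i ⊆ F_{i+1}`. -/
lemma mapA_F (P : TDPair V) (hdd : P.δ = P.d) (i : ℕ) :
    Submodule.map P.A (Fs P i) ≤ Fs P (i + 1) := by
  rw [Fs]
  simp only [Submodule.map_iSup]
  apply iSup₂_le; intro k hk
  simp only [Finset.mem_Icc] at hk
  have heq : evSp P.Astar P.ψ P.δ k = P.Astar.eigenspace (P.ψ k) := if_pos (by omega)
  rw [← heq]
  refine (P.triAstar k (by omega)).trans ?_
  refine sup_le (sup_le ?_ ?_) ?_ <;> apply evSpAstar_le_Fs P hdd <;> omega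

/-- `(A* - ψ (d-i)) F_i ⊆ Fp_i`. -/
lemma mapAstar_F (P : TDPair V) (i : ℕ) :
    Submodule.map (P.Astar - P.ψ (P.d - i) • 1) (Fs P i) ≤ Fp P i := by
  rw [Fs]
  simp only [Submodule.map_iSup]
  apply iSup₂_le; intro k hk
  simp only [Finset.mem_Icc] at hk
  rintro _ ⟨x, hx, rfl⟩
  rcases eq_or_lt_of_le hk.1 with rfl | hlt
  · rw [eig_sub_smul_apply _ hx, sub_self, zero_smul]
    exact Submodule.zero_mem _
  · rw [eig_sub_smul_apply _ hx]
    exact le_Fp P (by omega) hk.2 (Submodule.smul_mem _ _ hx)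

/-- Combined: `(A - θ i) U_i ⊆ U_{i+1}` pointwise. -/
lemma key_A (P : TDPair V) (hdd : P.δ = P.d) (i : ℕ) {x : V} (hx : x ∈ Fs P i ⊓ Gs P i) :
    (P.A - P.θ i • 1) x ∈ Fs P (i + 1) ⊓ Gs P (i + 1) := by
  obtain ⟨hxF, hxG⟩ := hx
  constructor
  · have h1 : (P.A - P.θ i • 1) x = P.A x - P.θ i • x := by simp
    rw [h1]
    exact Submodule.sub_mem _ (mapA_F P hdd i ⟨x, hxF, rfl⟩)
      (Submodule.smul_mem _ _ (Fs_mono P (Nat.le_succ i) hxF))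
  · exact mapA_G P i ⟨x, hxG, rfl⟩

/-- Combined: `(A* - ψ (d-i)) U_i ⊆ Fp i ⊓ G_{i-1}` pointwise. -/
lemma key_Astar (P : TDPair V) (i : ℕ) {x : V} (hx : x ∈ Fs P i ⊓ Gs P i) :
    (P.Astar - P.ψ (P.d - i) • 1) x ∈ Fp P i ⊓ Gs P (i - 1) := by
  obtain ⟨hxF, hxG⟩ := hx
  constructor
  · exact mapAstar_F P i ⟨x, hxF, rfl⟩
  · have h1 : (P.Astar - P.ψ (P.d - i) • 1) x = P.Astar x - P.ψ (P.d - i) • x := by simp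
    rw [h1]
    exact Submodule.sub_mem _ (mapAstar_G P i ⟨x, hxG, rfl⟩)
      (Submodule.smul_mem _ _ (Gs_anti P (Nat.sub_le i 1) hxG))

/-- Same for K spaces: `(A - θ (i+1)) K_i ⊆ K_{i+1}`. -/
lemma keyK_A (P : TDPair V) (hdd : P.δ = P.d) (i : ℕ) {x : V}
    (hx : x ∈ Fs P i ⊓ Gs P (i + 1)) :
    (P.A - P.θ (i + 1) • 1) x ∈ Fs P (i + 1) ⊓ Gs P (i + 2) := by
  obtain ⟨hxF, hxG⟩ := hx
  constructor
  · have h1 : (P.A - P.θ (i + 1) • 1) x = P.A x - P.θ (i + 1) • x := by simp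
    rw [h1]
    exact Submodule.sub_mem _ (mapA_F P hdd i ⟨x, hxF, rfl⟩)
      (Submodule.smul_mem _ _ (Fs_mono P (Nat.le_succ i) hxF))
  · exact mapA_G P (i + 1) ⟨x, hxG, rfl⟩

/-- `(A* - ψ (d-i)) K_i ⊆ K_{i-1}` pointwise (with `Fp` bound on F side). -/
lemma keyK_Astar (P : TDPair V) (i : ℕ) {x : V} (hx : x ∈ Fs P i ⊓ Gs P (i + 1)) :
    (P.Astar - P.ψ (P.d - i) • 1) x ∈ Fp P i ⊓ Gs P i := by
  obtain ⟨hxF, hxG⟩ := hx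
  constructor
  · exact mapAstar_F P i ⟨x, hxF, rfl⟩
  · have h1 : (P.Astar - P.ψ (P.d - i) • 1) x = P.Astar x - P.ψ (P.d - i) • x := by simp
    rw [h1]
    have := mapAstar_G P (i + 1) ⟨x, hxG, rfl⟩
    simp only [Nat.add_sub_cancel] at this
    exact Submodule.sub_mem _ this
      (Submodule.smul_mem _ _ (Gs_anti P (Nat.le_succ i) hxG))

end TDPairAux

namespace TDPairAux
variable {V : Type*} [AddCommGroup V] [Module ℂ V]

/-- The sum of the `U_i` is all of `V`. -/
lemma span_top (P : TDPair V) (hdd : P.δ = P.d) :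
    (⨆ i : Fin (P.d + 1), Uuu P i) = ⊤ := by
  set W := ⨆ i : Fin (P.d + 1), Uuu P (i : ℕ) with hW
  have hUW : ∀ n : ℕ, Fs P n ⊓ Gs P n ≤ W := by
    intro n
    by_cases h : n ≤ P.d
    · have : Fs P n ⊓ Gs P n = Uuu P ((⟨n, by omega⟩ : Fin (P.d + 1)) : ℕ) := (Uuu_eq P n).symm
      rw [this]
      exact le_iSup (fun i : Fin (P.d + 1) => Uuu P (i : ℕ)) ⟨n, by omega⟩
    · refine inf_le_right.trans ?_
      rw [Gs_bot P (by omega)]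
      exact bot_le
  have hA : Submodule.map P.A W ≤ W := by
    rw [hW, Submodule.map_iSup]
    apply iSup_le; intro i
    rintro _ ⟨x, hx, rfl⟩
    have hx' : x ∈ Fs P (i : ℕ) ⊓ Gs P (i : ℕ) := by rwa [← Uuu_eq]
    have h1 := key_A P hdd (i : ℕ) hx'
    have h2 : P.A x = (P.A - P.θ (i : ℕ) • 1) x + P.θ (i : ℕ) • x := by simp
    rw [h2]
    exact W.add_mem (hUW _ h1) (W.smul_mem _ (hUW _ hx'))
  have hAstar : Submodule.map P.Astar W ≤ W := by
    rw [hW, Submodule.map_iSup]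
    apply iSup_le; intro i
    rintro _ ⟨x, hx, rfl⟩
    have hx' : x ∈ Fs P (i : ℕ) ⊓ Gs P (i : ℕ) := by rwa [← Uuu_eq]
    have h1 := key_Astar P (i : ℕ) hx'
    have h1' : (P.Astar - P.ψ (P.d - (i : ℕ)) • 1) x ∈ Fs P ((i : ℕ) - 1) ⊓ Gs P ((i : ℕ) - 1) :=
      ⟨Fp_le_pred P _ h1.1, h1.2⟩
    have h2 : P.Astar x = (P.Astar - P.ψ (P.d - (i : ℕ)) • 1) x + P.ψ (P.d - (i : ℕ)) • x := by
      simp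
    rw [h2]
    exact W.add_mem (hUW _ h1') (W.smul_mem _ (hUW _ hx'))
  rcases P.irred W hA hAstar with h | h
  · exfalso
    have hVd : P.A.eigenspace (P.θ P.d) ≤ W := by
      refine le_trans (le_inf ?_ (le_Gs P le_rfl le_rfl)) (hUW P.d)
      rw [Fs_top P hdd le_rfl]
      exact le_top
    rw [h, le_bot_iff] at hVd
    exact P.eigA_ne P.d le_rfl hVd
  · exact h

/-- The spaces `K_i = F_i ⊓ G_{i+1}` all vanish. -/
lemma K_bot (P : TDPair V) (hdd : P.δ = P.d) (i : ℕ) :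
    Fs P i ⊓ Gs P (i + 1) = ⊥ := by
  set W := ⨆ n ∈ Finset.range P.d, (Fs P n ⊓ Gs P (n + 1)) with hW
  have hKW : ∀ n : ℕ, Fs P n ⊓ Gs P (n + 1) ≤ W := by
    intro n
    by_cases h : n < P.d
    · exact le_biSup (fun n => Fs P n ⊓ Gs P (n + 1)) (Finset.mem_range.2 h)
    · refine inf_le_right.trans ?_
      rw [Gs_bot P (by omega)]
      exact bot_le
  have hA : Submodule.map P.A W ≤ W := by
    rw [hW]
    simp only [Submodule.map_iSup]
    apply iSup₂_le; intro n hn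
    rintro _ ⟨x, hx, rfl⟩
    have h1 := keyK_A P hdd n hx
    have h2 : P.A x = (P.A - P.θ (n + 1) • 1) x + P.θ (n + 1) • x := by simp
    rw [h2]
    exact W.add_mem (hKW _ h1) (W.smul_mem _ (hKW _ hx))
  have hAstar : Submodule.map P.Astar W ≤ W := by
    rw [hW]
    simp only [Submodule.map_iSup]
    apply iSup₂_le; intro n hn
    rintro _ ⟨x, hx, rfl⟩
    have h1 := keyK_Astar P n hx
    have h2 : P.Astar x = (P.Astar - P.ψ (P.d - n) • 1) x + P.ψ (P.d - n) • x := by simp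
    rw [h2]
    refine W.add_mem ?_ (W.smul_mem _ (hKW _ hx))
    rcases n with _ | m
    · have : (P.Astar - P.ψ (P.d - 0) • 1) x = 0 := by
        have := h1.1
        rw [Fp_zero] at this
        simpa using this
      rw [this]; exact W.zero_mem
    · have h1' : (P.Astar - P.ψ (P.d - (m + 1)) • 1) x ∈ Fs P m ⊓ Gs P (m + 1) := by
        refine ⟨?_, h1.2⟩
        have := Fp_le_pred P (m + 1) h1.1
        simpa using this
      exact hKW m h1'
  rcases P.irred W hA hAstar with h | h
  · exact le_bot_iff.1 ((hKW i).trans_eq h)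
  · exfalso
    have hWle : W ≤ Gs P 1 := by
      rw [hW]
      apply iSup₂_le; intro n hn
      exact inf_le_right.trans (Gs_anti P (by omega))
    rw [h, top_le_iff] at hWle
    have hne : ∀ k, 1 ≤ k → k ≤ P.d → P.θ k ≠ P.θ 0 := by
      intro k h1 h2 heq
      have := P.θ_inj k h2 0 (by omega) heq
      omega
    have hG1 : Gs P 1 ≤ ⨆ μ, ⨆ _ : μ ≠ P.θ 0, P.A.eigenspace μ := by
      rw [Gs]
      apply iSup₂_le; intro k hk
      simp only [Finset.mem_Icc] at hk
      exact le_iSup₂ (f := fun μ (_ : μ ≠ P.θ 0) => P.A.eigenspace μ) (P.θ k)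
        (hne k hk.1 hk.2)
    have hdisj := P.A.eigenspaces_iSupIndep (P.θ 0)
    have : P.A.eigenspace (P.θ 0) = ⊥ := by
      rw [← le_bot_iff]
      intro x hx
      exact hdisj.le_bot ⟨hx, hG1 (hWle ▸ Submodule.mem_top)⟩
    exact P.eigA_ne 0 (by omega) this

end TDPairAux

/-- The `(↓,↓)/(↑,↓)/(↓,↑)/(↑,↑)`-split decomposition:
`V = U_0 + U_1 + ⋯ + U_d` is a direct sum. -/
theorem tdpair_split_uu {V : Type*} [AddCommGroup V] [Module ℂ V]
    [FiniteDimensional ℂ V] (hV : 0 < Module.finrank ℂ V) (P : TDPair V)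
    (hdd : P.δ = P.d) :
    iSupIndep (fun i : Fin (P.d + 1) => Uuu P i) ∧
      (⨆ i : Fin (P.d + 1), Uuu P i) = ⊤ := by
  open TDPairAux in
  refine ⟨?_, span_top P hdd⟩
  intro i
  rw [disjoint_iff, eq_bot_iff]
  intro x hx
  obtain ⟨hx1, hx2⟩ := hx
  set n : ℕ := (i : ℕ) with hn
  have hnd : n ≤ P.d := by omega
  have hsup : (⨆ j, ⨆ _ : j ≠ i, Uuu P (j : ℕ)) ≤ Fp P n ⊔ Gs P (n + 1) := by
    apply iSup₂_le; intro j hj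
    rcases lt_trichotomy (j : ℕ) n with h | h | h
    · refine le_trans ?_ le_sup_left
      refine le_trans inf_le_left ?_
      rw [show (⨆ k ∈ Finset.Icc (P.d - (j : ℕ)) P.d, P.Astar.eigenspace (P.ψ k)) = Fs P (j : ℕ)
        from rfl]
      rw [Fp]
      apply biSup_mono; intro k hk
      simp only [Finset.mem_Icc] at *
      omega
    · exact absurd (Fin.ext h) hj
    · refine le_trans ?_ le_sup_right
      refine le_trans inf_le_right ?_
      exact Gs_anti P (by omega)
  have hx2' := hsup hx2
  obtain ⟨y, hy, z, hz, hyz⟩ := Submodule.mem_sup.1 hx2'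
  have hxU : x ∈ Fs P n ⊓ Gs P n := hx1
  have hzF : z ∈ Fs P n := by
    have hzeq : z = x - y := by rw [← hyz]; abel
    rw [hzeq]
    exact Submodule.sub_mem _ hxU.1 (Fp_le P n hy)
  have hz0 : z = 0 := by
    have : z ∈ Fs P n ⊓ Gs P (n + 1) := ⟨hzF, hz⟩
    rw [K_bot P hdd n] at this
    simpa using this
  have hxy : x = y := by rw [← hyz, hz0, add_zero]
  rcases Nat.eq_zero_or_pos n with h0 | hpos
  · rw [hxy]
    have := hy
    rw [h0, Fp_zero] at this
    simpa using this
  · have hxK : x ∈ Fs P (n - 1) ⊓ Gs P ((n - 1) + 1) := by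
      constructor
      · rw [hxy]; exact Fp_le_pred P n hy
      · rw [show n - 1 + 1 = n from by omega]
        exact hxU.2
    rw [K_bot P hdd (n - 1)] at hxK
    simpa using hxK

end
end

section
/- Let A, A* be a tridiagonal pair on V with diameter d, and suppose there exists a positive definite Hermitian form (·,·) on V satisfying (Au,v) = (u,Av) and (A*u,v) = (u,A*v) for all u,v ∈ V. Then for 0 ≤ i,j ≤ d with i + j ≠ d, the subspaces U^{↓↓}_i = (V*_0 + ⋯ + V*_i) ∩ (V_0 + ⋯ + V_{d−i}) and U^{↑↑}_j = (V*_{d−j} + ⋯ + V*_d) ∩ (V_j + ⋯ + V_d) are orthogonal with respect to (·,·). -/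
noncomputable section

open Module

section Aux

variable {V : Type*} [AddCommGroup V] [Module ℂ V]
variable (form : V → V → ℂ)

lemma form_zero_left (form_smul : ∀ (a : ℂ) (u v : V), form (a • u) v = a * form u v)
    (w : V) : form 0 w = 0 := by
  have := form_smul 0 0 w; simpa using this

lemma form_zero_right (form_smul : ∀ (a : ℂ) (u v : V), form (a • u) v = a * form u v)
    (form_conj : ∀ u v : V, form v u = starRingEnd ℂ (form u v))
    (w : V) : form w 0 = 0 := by
  rw [form_conj, form_zero_left form form_smul]; simp

lemma form_orth_sup
    (form_add : ∀ u v w : V, form (u + v) w = form u w + form v w)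
    (form_smul : ∀ (a : ℂ) (u v : V), form (a • u) v = a * form u v)
    (form_conj : ∀ u v : V, form v u = starRingEnd ℂ (form u v))
    {ι κ : Type*} (p : ι → Submodule ℂ V) (q : κ → Submodule ℂ V)
    (h : ∀ i j, ∀ x ∈ p i, ∀ y ∈ q j, form x y = 0)
    {u v : V} (hu : u ∈ ⨆ i, p i) (hv : v ∈ ⨆ j, q j) : form u v = 0 := by
  have add_right : ∀ x y w : V, form w (x + y) = form w x + form w y := by
    intro x y w
    rw [form_conj, form_add, map_add, ← form_conj, ← form_conj]
  refine Submodule.iSup_induction p (motive := fun u => form u v = 0) hu ?_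
    (form_zero_left form form_smul v) ?_
  · intro i x hx
    refine Submodule.iSup_induction q (motive := fun w => form x w = 0) hv ?_
      (form_zero_right form form_smul form_conj x) ?_
    · exact fun j y hy => h i j x hx y hy
    · intro y z hy hz; rw [add_right, hy, hz, add_zero]
  · intro x y hx hy; rw [form_add, hx, hy, add_zero]

lemma form_orth_bsup
    (form_add : ∀ u v w : V, form (u + v) w = form u w + form v w)
    (form_smul : ∀ (a : ℂ) (u v : V), form (a • u) v = a * form u v)
    (form_conj : ∀ u v : V, form v u = starRingEnd ℂ (form u v))
    (s t : Finset ℕ) (p q : ℕ → Submodule ℂ V)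
    (h : ∀ i ∈ s, ∀ j ∈ t, ∀ x ∈ p i, ∀ y ∈ q j, form x y = 0)
    {u v : V} (hu : u ∈ ⨆ i ∈ s, p i) (hv : v ∈ ⨆ j ∈ t, q j) : form u v = 0 := by
  refine form_orth_sup form form_add form_smul form_conj _ _ ?_ hu hv
  intro i j x hx y hy
  by_cases hi : i ∈ s
  · by_cases hj : j ∈ t
    · rw [iSup_pos hi] at hx; rw [iSup_pos hj] at hy
      exact h i hi j hj x hx y hy
    · rw [iSup_neg hj, Submodule.mem_bot] at hy
      rw [hy]; exact form_zero_right form form_smul form_conj x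
  · rw [iSup_neg hi, Submodule.mem_bot] at hx
    rw [hx]; exact form_zero_left form form_smul y

lemma eig_real
    (form_smul : ∀ (a : ℂ) (u v : V), form (a • u) v = a * form u v)
    (form_conj : ∀ u v : V, form v u = starRingEnd ℂ (form u v))
    (form_pos : ∀ v : V, v ≠ 0 → 0 < (form v v).re)
    (B : Module.End ℂ V) (hB : ∀ u v : V, form (B u) v = form u (B v))
    (μ : ℂ) (h : B.eigenspace μ ≠ ⊥) : starRingEnd ℂ μ = μ := by
  obtain ⟨x, hx, hx0⟩ := (Submodule.ne_bot_iff _).mp h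
  have hx' : B x = μ • x := Module.End.mem_eigenspace_iff.mp hx
  have h1 : form (B x) x = μ * form x x := by rw [hx', form_smul]
  have h2 : form x (B x) = starRingEnd ℂ μ * form x x := by
    rw [hx', form_conj, form_smul, map_mul, ← form_conj x x]
  have hmain : μ * form x x = starRingEnd ℂ μ * form x x := by
    rw [← h1, ← h2, hB]
  have hne : form x x ≠ 0 := by
    intro hc
    have := form_pos x hx0
    rw [hc] at this; simp at this
  exact (mul_right_cancel₀ hne hmain).symm

lemma eig_orth
    (form_smul : ∀ (a : ℂ) (u v : V), form (a • u) v = a * form u v)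
    (form_conj : ∀ u v : V, form v u = starRingEnd ℂ (form u v))
    (B : Module.End ℂ V) (hB : ∀ u v : V, form (B u) v = form u (B v))
    (μ ν : ℂ) (hν : starRingEnd ℂ ν = ν) (hμν : μ ≠ ν)
    {x y : V} (hx : x ∈ B.eigenspace μ) (hy : y ∈ B.eigenspace ν) :
    form x y = 0 := by
  have hx' : B x = μ • x := Module.End.mem_eigenspace_iff.mp hx
  have hy' : B y = ν • y := Module.End.mem_eigenspace_iff.mp hy
  have h1 : form (B x) y = μ * form x y := by rw [hx', form_smul]
  have h2 : form x (B y) = ν * form x y := by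
    rw [hy', form_conj, form_smul, map_mul, hν, ← form_conj y x]
  have hmain : μ * form x y = ν * form x y := by rw [← h1, ← h2, hB]
  have : (μ - ν) * form x y = 0 := by rw [sub_mul, hmain, sub_self]
  rcases mul_eq_zero.mp this with h | h
  · exact absurd (sub_eq_zero.mp h) hμν
  · exact h

end Aux

theorem tdpair_orth_dd_uu {V : Type*} [AddCommGroup V] [Module ℂ V]
    [FiniteDimensional ℂ V] (hV : 0 < Module.finrank ℂ V) (P : TDPair V)
    (hdd : P.δ = P.d)
    (form : V → V → ℂ)
    (form_add : ∀ u v w : V, form (u + v) w = form u w + form v w)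
    (form_smul : ∀ (a : ℂ) (u v : V), form (a • u) v = a * form u v)
    (form_conj : ∀ u v : V, form v u = starRingEnd ℂ (form u v))
    (form_pos : ∀ v : V, v ≠ 0 → 0 < (form v v).re)
    (form_A : ∀ u v : V, form (P.A u) v = form u (P.A v))
    (form_Astar : ∀ u v : V, form (P.Astar u) v = form u (P.Astar v)) :
    ∀ i ≤ P.d, ∀ j ≤ P.d, i + j ≠ P.d →
      ∀ u ∈ Udd P i, ∀ v ∈ Uuu P j, form u v = 0 := by
  intro i hi j hj hij u hu v hv
  obtain ⟨hu1, hu2⟩ := Submodule.mem_inf.mp hu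
  obtain ⟨hv1, hv2⟩ := Submodule.mem_inf.mp hv
  rcases Nat.lt_or_ge (i + j) P.d with hlt | hge
  · -- disjoint A*-eigenspace index ranges
    refine form_orth_bsup form form_add form_smul form_conj _ _ _ _ ?_ hu1 hv1
    intro k hk l hl x hx y hy
    rw [Finset.mem_range] at hk
    rw [Finset.mem_Icc] at hl
    have hkd : k ≤ P.δ := by omega
    have hld : l ≤ P.δ := by omega
    have hkl : k ≠ l := by omega
    refine eig_orth form form_smul form_conj P.Astar form_Astar _ _
      (eig_real form form_smul form_conj form_pos P.Astar form_Astar _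
        (P.eigAstar_ne l hld)) ?_ hx hy
    exact fun hc => hkl (P.ψ_inj k hkd l hld hc)
  · -- disjoint A-eigenspace index ranges
    refine form_orth_bsup form form_add form_smul form_conj _ _ _ _ ?_ hu2 hv2
    intro k hk l hl x hx y hy
    rw [Finset.mem_range] at hk
    rw [Finset.mem_Icc] at hl
    have hkd : k ≤ P.d := by omega
    have hld : l ≤ P.d := by omega
    have hkl : k ≠ l := by omega
    refine eig_orth form form_smul form_conj P.A form_A _ _
      (eig_real form form_smul form_conj form_pos P.A form_A _
        (P.eigA_ne l hld)) ?_ hx hy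
    exact fun hc => hkl (P.θ_inj k hkd l hld hc)

end
end
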